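/- Let a be a weak composition of length n with at least one nonzero entry and let k be the largest index with a_k ≠ 0. Then the fundamental slide polynomial 𝔉_a is quasisymmetric in the variables x_1,…,x_k if and only if a is quasi-flat. Moreover, when a is quasi-flat, 𝔉_a = F_{flat(a)}(x_1,…,x_k). -/

import Mathlib

open scoped Classical

namespace SlidePaper

/-- Sum of the first `i` entries of a weak composition of length `n`. -/
def psum {n : ℕ} (a : Fin n → ℕ) (i : ℕ) : ℕ :=
  ∑ j ∈ Finset.univ.filter (fun j : Fin n => (j : ℕ) < i), a j

/-- `b` dominates `a`: all partial sums of `b` are at least those of `a`. -/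
def Dominates {n : ℕ} (b a : Fin n → ℕ) : Prop :=
  ∀ i : Fin (n + 1), psum a i ≤ psum b i

/-- The flattening of a weak composition: the list of its nonzero entries in order. -/
def flat {n : ℕ} (a : Fin n → ℕ) : List ℕ :=
  (List.ofFn a).filter (fun x => x ≠ 0)

/-- `β` refines `α`: `β` splits into consecutive blocks with sums `α₁, α₂, …`. -/
def Refines (β α : List ℕ) : Prop :=
  ∃ L : List (List ℕ), L.flatten = β ∧ L.map List.sum = α

/-- All weak compositions of length `n` with entries at most `k`. -/
def wcFinset (n k : ℕ) : Finset (Fin n → ℕ) :=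
  Fintype.piFinset fun _ => Finset.range (k + 1)

/-- The monomial slide polynomial `𝔐_a`. -/
noncomputable def slideM {n : ℕ} (a : Fin n → ℕ) : MvPolynomial (Fin n) ℤ :=
  ∑ b ∈ (wcFinset n (∑ i, a i)).filter (fun b => Dominates b a ∧ flat b = flat a),
    MvPolynomial.monomial (Finsupp.equivFunOnFinite.symm b) 1

/-- The fundamental slide polynomial `𝔉_a`. -/
noncomputable def slideF {n : ℕ} (a : Fin n → ℕ) : MvPolynomial (Fin n) ℤ :=
  ∑ b ∈ (wcFinset n (∑ i, a i)).filter (fun b => Dominates b a ∧ Refines (flat b) (flat a)),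
    MvPolynomial.monomial (Finsupp.equivFunOnFinite.symm b) 1

/-- A weak composition is quasi-flat if its nonzero entries occupy consecutive positions. -/
def QuasiFlat {n : ℕ} (a : Fin n → ℕ) : Prop :=
  ∀ i j l : Fin n, i ≤ j → j ≤ l → a i ≠ 0 → a l ≠ 0 → a j ≠ 0

/-- `b` strongly dominates `a`. -/
def StronglyDominates {n : ℕ} (b a : Fin n → ℕ) : Prop :=
  Dominates b a ∧ ∀ c : Fin n → ℕ, Dominates c a → flat c = flat b → Dominates c b

/-- The exponent vector placing the parts of `α` at the positions `i`. -/
noncomputable def placeExp {n : ℕ} (α : List ℕ) (i : Fin α.length → Fin n) : Fin n →₀ ℕ :=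
  ∑ t : Fin α.length, Finsupp.single (i t) (α.get t)

/-- `f` is quasisymmetric in the variables `x_1, …, x_k` (0-indexed: `x_0, …, x_{k-1}`). -/
def IsQuasisymmetricIn {n : ℕ} (k : ℕ) (f : MvPolynomial (Fin n) ℤ) : Prop :=
  ∀ α : List ℕ, (∀ x ∈ α, 0 < x) →
    ∀ i j : Fin α.length → Fin n, StrictMono i → StrictMono j →
      (∀ t, (i t : ℕ) < k) → (∀ t, (j t : ℕ) < k) →
      MvPolynomial.coeff (placeExp α i) f = MvPolynomial.coeff (placeExp α j) f

/-- The monomial quasisymmetric polynomial `M_α(x_1, …, x_k)` inside `ℤ[x_1, …, x_n]`. -/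
noncomputable def Mqs (n k : ℕ) (α : List ℕ) : MvPolynomial (Fin n) ℤ :=
  ∑ i ∈ (Finset.univ : Finset (Fin α.length → Fin n)).filter
      (fun i : Fin α.length → Fin n => StrictMono i ∧ ∀ t, (i t : ℕ) < k),
    ∏ t : Fin α.length, (MvPolynomial.X (i t) : MvPolynomial (Fin n) ℤ) ^ α.get t

/-- The fundamental quasisymmetric polynomial `F_α(x_1, …, x_k)` inside `ℤ[x_1, …, x_n]`. -/
noncomputable def Fqs (n k : ℕ) (α : List ℕ) : MvPolynomial (Fin n) ℤ :=
  ∑ c ∈ (Finset.univ : Finset (Composition α.sum)).filter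
      (fun c => Refines c.blocks α ∧ c.blocks.length ≤ k),
    Mqs n k c.blocks

/-- Place the weak composition `a` (of length `N`) at offset `k` inside length `M`. -/
def shiftComp {N : ℕ} (k M : ℕ) (a : Fin N → ℕ) : Fin M → ℕ :=
  fun i => if h : k ≤ (i : ℕ) ∧ (i : ℕ) - k < N then a ⟨(i : ℕ) - k, h.2⟩ else 0

/-- Spread the values `g` to positions `ι` inside a weak composition of length `n`. -/
def spread {l n : ℕ} (ι : Fin l → Fin n) (g : Fin l → ℕ) : Fin n → ℕ :=
  fun i => ∑ k, if ι k = i then g k else 0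

/-- The monomial quasisymmetric function `M_α` in infinitely many variables. -/
noncomputable def MqsFun (α : List ℕ) : MvPowerSeries ℕ ℤ :=
  fun d => if ∃ i : Fin α.length → ℕ, StrictMono i ∧
      d = ∑ t : Fin α.length, Finsupp.single (i t) (α.get t) then 1 else 0

/-- The fundamental quasisymmetric function `F_α` in infinitely many variables. -/
noncomputable def FqsFun (α : List ℕ) : MvPowerSeries ℕ ℤ :=
  ∑ c ∈ (Finset.univ : Finset (Composition α.sum)).filter (fun c => Refines c.blocks α),
    MqsFun c.blocks

/-- The cells of the Young diagram of `lam` (French notation): row `r` (from the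
bottom, 0-indexed) has `lam.get r` cells. -/
abbrev Cells (lam : List ℕ) := Σ r : Fin lam.length, Fin (lam.get r)

/-- A filling of `lam` with entries in `{1, …, n}` (encoded as `Fin n`) is a semistandard
Young tableau: rows weakly increase left to right, columns strictly increase bottom to top. -/
def IsSSYT {n : ℕ} {lam : List ℕ} (T : Cells lam → Fin n) : Prop :=
  (∀ (r : Fin lam.length) (c c' : Fin (lam.get r)), c ≤ c' → T ⟨r, c⟩ ≤ T ⟨r, c'⟩) ∧
  (∀ (r r' : Fin lam.length) (c' : Fin (lam.get r')) (h : (c' : ℕ) < lam.get r),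
      (r : ℕ) < (r' : ℕ) → T ⟨r, ⟨c', h⟩⟩ < T ⟨r', c'⟩)

/-- The weight of a filling: the `v`-th entry counts the occurrences of the value `v`. -/
def wtT {n : ℕ} {lam : List ℕ} (T : Cells lam → Fin n) : Fin n → ℕ :=
  fun v => (Finset.univ.filter (fun x : Cells lam => T x = v)).card

/-- A filling is quasi-Yamanouchi if for every value `v > 1`, the leftmost occurrence of `v`
lies weakly left of some occurrence of `v - 1`. -/
def IsQY {n : ℕ} {lam : List ℕ} (T : Cells lam → Fin n) : Prop :=
  ∀ (v : Fin n) (x : Cells lam), T x = v → 0 < (v : ℕ) →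
    (∀ y : Cells lam, T y = v → (x.2 : ℕ) ≤ (y.2 : ℕ)) →
    ∃ z : Cells lam, (T z : ℕ) + 1 = (v : ℕ) ∧ (x.2 : ℕ) ≤ (z.2 : ℕ)

/-- The Schur polynomial `s_lam(x_1, …, x_n)` as the generating function of
semistandard Young tableaux. -/
noncomputable def schurPoly (n : ℕ) (lam : List ℕ) : MvPolynomial (Fin n) ℤ :=
  ∑ T ∈ (Finset.univ : Finset (Cells lam → Fin n)).filter (fun T => IsSSYT T),
    MvPolynomial.monomial (Finsupp.equivFunOnFinite.symm (wtT T)) 1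

/-- One destandardization step on fillings: for some value `v` occurring in `T` whose
leftmost occurrence is strictly right of every occurrence of `v - 1`, every `v` is
decremented to `v - 1`. -/
def TabStep {n : ℕ} {lam : List ℕ} (T T' : Cells lam → Fin n) : Prop :=
  ∃ v : Fin n, 0 < (v : ℕ) ∧ (∃ x, T x = v) ∧
    (∀ x y : Cells lam, T x = v → (T y : ℕ) + 1 = (v : ℕ) → (y.2 : ℕ) < (x.2 : ℕ)) ∧
    ∀ x : Cells lam, (T' x : ℕ) = if T x = v then (v : ℕ) - 1 else (T x : ℕ)

/-- The reading word of a set of crosses: rows are read from top to bottom, each row from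
left to right, the cross in (0-indexed) row `i` and column `j` recording the letter `i + j`
(representing the simple transposition swapping `i + j` and `i + j + 1` of `{0, 1, 2, …}`). -/
def readWord (P : Finset (ℕ × ℕ)) : List ℕ :=
  ((List.range (P.sup Prod.fst + 1)).reverse).flatMap
    (fun i => ((List.range (P.sup Prod.snd + 1)).filter (fun j => decide ((i, j) ∈ P))).map
      (fun j => i + j))

/-- The permutation `s_{i_ℓ} ⋯ s_{i_1}` associated to the word `(i_1, …, i_ℓ)`,
where `s_k` swaps `k` and `k + 1`. -/
def wordPerm (l : List ℕ) : Equiv.Perm ℕ :=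
  ((l.map (fun k => Equiv.swap k (k + 1))).reverse).prod

/-- A word is reduced if no shorter word has the same product. -/
def IsReducedWord (l : List ℕ) : Prop :=
  ∀ l' : List ℕ, wordPerm l' = wordPerm l → l.length ≤ l'.length

/-- `P` is a reduced pipe dream of shape `w`: the pipes trace out `w` and no two pipes
cross more than once, equivalently the reading word of `P` is a reduced word for `w`. -/
def IsPD (w : Equiv.Perm ℕ) (P : Finset (ℕ × ℕ)) : Prop :=
  wordPerm (readWord P) = w ∧ IsReducedWord (readWord P)

/-- `P` is a quasi-Yamanouchi pipe dream of shape `w`: for every row, the westernmost cross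
is in the first column or lies weakly west of some cross in the row above. -/
def IsQPD (w : Equiv.Perm ℕ) (P : Finset (ℕ × ℕ)) : Prop :=
  IsPD w P ∧ ∀ i j : ℕ, (i, j) ∈ P → (∀ j', (i, j') ∈ P → j ≤ j') →
    (j = 0 ∨ ∃ j', (i + 1, j') ∈ P ∧ j ≤ j')

/-- One destandardization step on pipe dreams: a row with no cross in the first column,
all of whose crosses lie strictly east of every cross in the row above, has all its
crosses moved one step northwest. -/
def PDStep (P P' : Finset (ℕ × ℕ)) : Prop :=
  ∃ r : ℕ, (∃ j, (r, j) ∈ P) ∧ (r, 0) ∉ P ∧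
    (∀ j j', (r, j) ∈ P → (r + 1, j') ∈ P → j' < j) ∧
    P' = P.filter (fun p => p.1 ≠ r) ∪
      (P.filter (fun p => p.1 = r)).image (fun p => (r + 1, p.2 - 1))

/-- The number of crosses of `P` in (0-indexed) row `i`. -/
def rowWt (P : Finset (ℕ × ℕ)) (i : ℕ) : ℕ := (P.filter (fun p => p.1 = i)).card

/-- The weight of a pipe dream, as a weak composition of length `n`. -/
def wtFin (n : ℕ) (P : Finset (ℕ × ℕ)) : Fin n → ℕ := fun i => rowWt P (i : ℕ)

/-- The flattened weight of a pipe dream: the list of nonzero row counts, bottom row first. -/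
def flatWt (P : Finset (ℕ × ℕ)) : List ℕ :=
  ((List.range (P.sup Prod.fst + 1)).map (rowWt P)).filter (fun x => x ≠ 0)

/-- The Schubert polynomial of `w` in the variables `x_1, …, x_n`, as the generating
function of reduced pipe dreams of shape `w`. -/
noncomputable def SchubertPoly (n : ℕ) (w : Equiv.Perm ℕ) : MvPolynomial (Fin n) ℤ :=
  ∑ᶠ P ∈ {P : Finset (ℕ × ℕ) | IsPD w P},
    MvPolynomial.monomial (Finsupp.equivFunOnFinite.symm (wtFin n P)) 1

/-- The Lehmer code of `w` (0-indexed): `lehmer w i` counts `j > i` with `w j < w i`. -/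
noncomputable def lehmer (w : Equiv.Perm ℕ) (i : ℕ) : ℕ :=
  Set.ncard {j : ℕ | i < j ∧ w j < w i}

/-- The Lehmer code of `w` as a weak composition of length `n`. -/
noncomputable def lehmerFin (n : ℕ) (w : Equiv.Perm ℕ) : Fin n → ℕ :=
  fun i => lehmer w (i : ℕ)

/-- The number of inversions of `w`. -/
noncomputable def invCount (w : Equiv.Perm ℕ) : ℕ :=
  Set.ncard {p : ℕ × ℕ | p.1 < p.2 ∧ w p.2 < w p.1}

/-- The largest entry of the Lehmer code of `w`. -/
noncomputable def maxLehmer (w : Equiv.Perm ℕ) : ℕ :=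
  sSup (Set.range (lehmer w))

/-- The (0-indexed) position of the first descent of `w`. -/
noncomputable def firstDescent (w : Equiv.Perm ℕ) : ℕ :=
  sInf {i : ℕ | w (i + 1) < w i}

/-- `δ(w) = 1` if every position attaining `max(L(w))` is at or before the first descent,
and `δ(w) = 0` otherwise. -/
noncomputable def delta (w : Equiv.Perm ℕ) : ℤ :=
  if ∀ i : ℕ, lehmer w i = maxLehmer w → i ≤ firstDescent w then 1 else 0

/-- `η(w) = inv(w) − max(L(w)) + δ(w) − min{i : w_i > w_{i+1}}`. -/
noncomputable def eta (w : Equiv.Perm ℕ) : ℤ :=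
  (invCount w : ℤ) - (maxLehmer w : ℤ) + delta w - ((firstDescent w : ℤ) + 1)

/-- The decomposition of a list into maximal strictly increasing runs. -/
def runsStrict : List ℕ → List (List ℕ)
  | [] => []
  | x :: rest =>
    match runsStrict rest, rest with
    | r :: rs, y :: _ => if x < y then (x :: r) :: rs else [x] :: r :: rs
    | _, _ => [[x]]

/-- The descent composition of a word: lengths of its maximal increasing runs, a new run
beginning whenever a letter is followed by a weakly smaller letter. -/
def desStrict (l : List ℕ) : List ℕ := (runsStrict l).map List.length

/-- The decomposition of a list into maximal weakly increasing runs. -/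
def runsWeak : List ℕ → List (List ℕ)
  | [] => []
  | x :: rest =>
    match runsWeak rest, rest with
    | r :: rs, y :: _ => if x ≤ y then (x :: r) :: rs else [x] :: r :: rs
    | _, _ => [[x]]

/-- The descent composition of a word: the lengths of its maximal weakly increasing runs. -/
def desComp (l : List ℕ) : List ℕ := (runsWeak l).map List.length

/-- The permutation `1^m × w`, fixing `0, …, m-1` and acting by `w` shifted by `m` above. -/
def shiftPerm (m : ℕ) (w : Equiv.Perm ℕ) : Equiv.Perm ℕ where
  toFun i := if i < m then i else w (i - m) + m
  invFun i := if i < m then i else w.symm (i - m) + m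
  left_inv i := by
    dsimp only
    by_cases h : i < m
    · simp [h]
    · have h2 : ¬ (w (i - m) + m < m) := by omega
      rw [if_neg h, if_neg h2, Nat.add_sub_cancel, Equiv.symm_apply_apply]
      omega
  right_inv i := by
    dsimp only
    by_cases h : i < m
    · simp [h]
    · have h2 : ¬ (w.symm (i - m) + m < m) := by omega
      rw [if_neg h, if_neg h2, Nat.add_sub_cancel, Equiv.apply_symm_apply]
      omega

/-- The quasi-shuffle product of two (strong) compositions, as a multiset of compositions. -/
def qShuffle : List ℕ → List ℕ → Multiset (List ℕ)
  | [], β => {β}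
  | α, [] => {α}
  | a :: α, b :: β =>
      ((qShuffle α (b :: β)).map (a :: ·)) + ((qShuffle (a :: α) β).map (b :: ·)) +
        ((qShuffle α β).map ((a + b) :: ·))
termination_by α β => α.length + β.length
decreasing_by all_goals (simp only [List.length_cons]; omega)

def shuffles : List ℕ → List ℕ → Multiset (List ℕ)
  | [], B => {B}
  | A, [] => {A}
  | x :: A, y :: B =>
      ((shuffles A (y :: B)).map (x :: ·)) + ((shuffles (x :: A) B).map (y :: ·))
termination_by A B => A.length + B.length
decreasing_by all_goals (simp only [List.length_cons]; omega)

/-- The word `(2n-1)^{a_1} (2n-3)^{a_2} ⋯ 1^{a_n}` associated to a weak composition `a`. -/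
def wordA {n : ℕ} (a : Fin n → ℕ) : List ℕ :=
  (List.ofFn (fun i : Fin n => List.replicate (a i) (2 * n - 2 * (i : ℕ) - 1))).flatten

/-- The word `(2n)^{b_1} (2n-2)^{b_2} ⋯ 2^{b_n}` associated to a weak composition `b`. -/
def wordB {n : ℕ} (b : Fin n → ℕ) : List ℕ :=
  (List.ofFn (fun i : Fin n => List.replicate (b i) (2 * n - 2 * (i : ℕ)))).flatten

/-- A list (padded with trailing zeros) dominates a weak composition of length `n`. -/
def DominatesList {n : ℕ} (l : List ℕ) (a : Fin n → ℕ) : Prop :=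
  ∀ i : Fin (n + 1), psum a (i : ℕ) ≤ ((l.take (i : ℕ)).sum)

/-- The number of letters of the `A`-word (the odd letters) in the `k`-th weakly
increasing run of `C`. -/
def runCountA (C : List ℕ) (k : Fin (runsWeak C).length) : ℕ :=
  (((runsWeak C).get k).filter (fun z => z % 2 = 1)).length

/-- The number of letters of the `B`-word (the even letters) in the `k`-th weakly
increasing run of `C`. -/
def runCountB (C : List ℕ) (k : Fin (runsWeak C).length) : ℕ :=
  (((runsWeak C).get k).filter (fun z => z % 2 = 0)).length

/-- The length of the `k`-th weakly increasing run of `C`. -/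
def runLen (C : List ℕ) (k : Fin (runsWeak C).length) : ℕ :=
  ((runsWeak C).get k).length

/-- `c = bump_{(a,b)}(C)`: the unique weak composition of length `n` obtained by inserting
zero parts into `Des(C)` so that the correspondingly placed `Des_A` and `Des_B` dominate
`a` and `b`, minimal in dominance order among all such insertions. -/
def IsBumpS {n : ℕ} (a b : Fin n → ℕ) (C : List ℕ) (c : Fin n → ℕ) : Prop :=
  ∃ ι : Fin (runsWeak C).length → Fin n, StrictMono ι ∧
    c = spread ι (runLen C) ∧
    Dominates (spread ι (runCountA C)) a ∧ Dominates (spread ι (runCountB C)) b ∧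
    ∀ ι' : Fin (runsWeak C).length → Fin n, StrictMono ι' →
      Dominates (spread ι' (runCountA C)) a → Dominates (spread ι' (runCountB C)) b →
      Dominates (spread ι' (runLen C)) c

/-- The multiplicity `[c ∣ a ⧢ b]` of `c` in the slide product of `a` and `b`: the number of
shuffles `C` of the words of `a` and `b` lying in the shuffle set `SS(a,b)` with
`bump_{(a,b)}(C) = c`. -/
noncomputable def slideMult {n : ℕ} (a b c : Fin n → ℕ) : ℕ :=
  Multiset.card ((shuffles (wordA a) (wordB b)).filter
    (fun C => DominatesList ((runsWeak C).map
        (fun r => (r.filter (fun z => z % 2 = 1)).length)) a ∧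
      DominatesList ((runsWeak C).map (fun r => (r.filter (fun z => z % 2 = 0)).length)) b ∧
      IsBumpS a b C c))

/-- Membership in the quasi-shuffle set `QSS(a,b)`: a pair `(γ_a, γ_b)` of weak compositions
of a common length at most `n` with `γ_a ≥ a`, `flat(γ_a) = flat(a)`, `γ_b ≥ b`,
`flat(γ_b) = flat(b)` (after padding with trailing zeros), and all entries of
`γ_a + γ_b` positive. -/
def InQSS {n : ℕ} (a b : Fin n → ℕ) (x : (l : ℕ) × (Fin l → ℕ) × (Fin l → ℕ)) : Prop :=
  x.1 ≤ n ∧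
  Dominates (shiftComp 0 n x.2.1) a ∧ flat x.2.1 = flat a ∧
  Dominates (shiftComp 0 n x.2.2) b ∧ flat x.2.2 = flat b ∧
  ∀ k : Fin x.1, 0 < x.2.1 k + x.2.2 k

/-- `c = bump_{(a,b)}(γ_a, γ_b)`: the unique weak composition `c` of length `n` with
`flat(c) = γ_a + γ_b` whose decomposition `c = c_a + c_b` satisfies `c_a ≥ a` and
`c_b ≥ b`, minimal in dominance order among all such compositions. -/
def IsBumpQ {n : ℕ} (a b : Fin n → ℕ) (x : (l : ℕ) × (Fin l → ℕ) × (Fin l → ℕ))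
    (c : Fin n → ℕ) : Prop :=
  ∃ ι : Fin x.1 → Fin n, StrictMono ι ∧
    c = spread ι (fun k => x.2.1 k + x.2.2 k) ∧
    Dominates (spread ι x.2.1) a ∧ Dominates (spread ι x.2.2) b ∧
    ∀ ι' : Fin x.1 → Fin n, StrictMono ι' →
      Dominates (spread ι' x.2.1) a → Dominates (spread ι' x.2.2) b →
      Dominates (spread ι' (fun k => x.2.1 k + x.2.2 k)) c

/-- The multiplicity `[c ∣ a ⧻ b]` of `c` in the quasi-slide product of `a` and `b`: the
number of pairs in the quasi-shuffle set `QSS(a,b)` whose bump is `c`. -/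
noncomputable def qsMult {n : ℕ} (a b c : Fin n → ℕ) : ℕ :=
  Nat.card {x : (l : ℕ) × (Fin l → ℕ) × (Fin l → ℕ) // InQSS a b x ∧ IsBumpQ a b x c}

/-- The Stanley symmetric function `S_w`. -/
noncomputable def StanleySym (w : Equiv.Perm ℕ) : MvPowerSeries ℕ ℤ :=
  ∑ᶠ l ∈ {l : List ℕ | wordPerm l = w ∧ IsReducedWord l}, FqsFun (desStrict l)
section Chunk1
variable {n : ℕ}

lemma filter_ne_zero_sum (l : List ℕ) : (l.filter (fun x => x ≠ 0)).sum = l.sum := by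
  induction l with
  | nil => rfl
  | cons x xs ih => by_cases hx : x = 0 <;> simp_all [List.filter_cons]

lemma sum_flat (b : Fin n → ℕ) : (flat b).sum = ∑ i, b i := by
  rw [flat, filter_ne_zero_sum, List.sum_ofFn]

lemma mem_flat_ne_zero {b : Fin n → ℕ} {x : ℕ} (hx : x ∈ flat b) : x ≠ 0 := by
  rw [flat, List.mem_filter] at hx
  simpa using hx.2

lemma refines_sum {β α : List ℕ} (h : Refines β α) : β.sum = α.sum := by
  obtain ⟨L, h1, h2⟩ := h
  rw [← h1, ← h2, List.sum_flatten]

lemma refines_refl (α : List ℕ) : Refines α α := by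
  refine ⟨α.map (fun x => [x]), ?_, ?_⟩
  · induction α with
    | nil => rfl
    | cons x xs ih => simp_all
  · induction α with
    | nil => rfl
    | cons x xs ih => simp_all

lemma dominates_refl (a : Fin n → ℕ) : Dominates a a := fun _ => le_rfl

lemma spread_apply_inj {l : ℕ} {ι : Fin l → Fin n} (hι : Function.Injective ι)
    (g : Fin l → ℕ) (t : Fin l) : spread ι g (ι t) = g t := by
  rw [spread]
  refine (Finset.sum_eq_single_of_mem t (Finset.mem_univ t) ?_).trans (if_pos rfl)
  intro k _ hk
  exact if_neg (fun h => hk (hι h))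

lemma spread_eq_zero {l : ℕ} {ι : Fin l → Fin n} {g : Fin l → ℕ} {x : Fin n}
    (h : ∀ t, ι t ≠ x) : spread ι g x = 0 :=
  Finset.sum_eq_zero (fun t _ => if_neg (h t))

lemma exists_of_spread_ne_zero {l : ℕ} {ι : Fin l → Fin n} {g : Fin l → ℕ} {x : Fin n}
    (h : spread ι g x ≠ 0) : ∃ t, ι t = x := by
  by_contra hc
  push_neg at hc
  exact h (spread_eq_zero hc)

lemma psum_spread {l : ℕ} (ι : Fin l → Fin n) (g : Fin l → ℕ) (i : ℕ) :
    psum (spread ι g) i = ∑ t ∈ Finset.univ.filter (fun t => (ι t : ℕ) < i), g t := by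
  unfold psum spread
  rw [Finset.sum_comm]
  simp_rw [Finset.sum_ite_eq, Finset.mem_filter, Finset.mem_univ, true_and]
  rw [Finset.sum_filter]

lemma psum_split (b : Fin n → ℕ) (i : ℕ) :
    psum b i + ∑ j ∈ Finset.univ.filter (fun j : Fin n => ¬ ((j:ℕ) < i)), b j = ∑ j, b j :=
  Finset.sum_filter_add_sum_filter_not _ _ _

lemma strictMono_add_le {m : ℕ} {f : Fin m → ℕ} (hf : StrictMono f) :
    ∀ (v : ℕ) (s t : Fin m), (s:ℕ) + v = (t:ℕ) → f s + v ≤ f t := by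
  intro v
  induction v with
  | zero =>
    intro s t h
    have : s = t := Fin.ext (by omega)
    subst this
    omega
  | succ v ih =>
    intro s t h
    have ht' : (s:ℕ) + v < m := by have := t.isLt; omega
    have h1 := ih s ⟨(s:ℕ)+v, ht'⟩ rfl
    have h2 : f ⟨(s:ℕ)+v, ht'⟩ < f t := hf (by simp [Fin.lt_def]; omega)
    omega

lemma length_le_of_strictMono_lt {m k : ℕ} {ι : Fin m → Fin n} (hι : StrictMono ι)
    (hk : ∀ t, (ι t:ℕ) < k) : m ≤ k := by
  rcases m with _ | m'
  · omega
  · have hι' : StrictMono (fun t : Fin (m'+1) => (ι t : ℕ)) := fun a b h => hι h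
    have h1 := strictMono_add_le hι' m' ⟨0, by omega⟩ ⟨m', by omega⟩ (by simp)
    have h2 := hk ⟨m', by omega⟩
    omega

lemma flat_eq_nil {b : Fin n → ℕ} (h : ∀ i, b i = 0) : flat b = [] := by
  rw [flat, List.filter_eq_nil_iff]
  intro x hx
  rw [List.mem_ofFn] at hx
  obtain ⟨i, rfl⟩ := hx
  simp [h i]

lemma flat_spread : ∀ (n l : ℕ) (ι : Fin l → Fin n) (g : Fin l → ℕ), StrictMono ι →
    (∀ t, g t ≠ 0) → flat (spread ι g) = List.ofFn g := by
  intro n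
  induction n with
  | zero =>
    intro l ι g hι hg
    cases l with
    | zero =>
      rw [flat_eq_nil (fun i => i.elim0)]
      simp
    | succ l' => exact (ι 0).elim0
  | succ n ih =>
    intro l ι g hι hg
    cases l with
    | zero =>
      have hz : ∀ x, spread ι g x = 0 := fun x => by simp [spread]
      rw [flat_eq_nil hz]
      simp
    | succ l' =>
      have hinj := hι.injective
      rw [flat, List.ofFn_succ (f := spread ι g), List.filter_cons]
      by_cases h0 : ι 0 = 0
      · have hb0 : spread ι g 0 = g 0 := by
          conv_lhs => rw [← h0]
          exact spread_apply_inj hinj g 0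
        have hne : ∀ t : Fin l', (ι t.succ : ℕ) ≠ 0 := by
          intro t
          have h1 : ι 0 < ι t.succ := hι (Fin.succ_pos t)
          rw [h0] at h1
          rw [Fin.lt_def] at h1
          omega
        set ι' : Fin l' → Fin n := fun t =>
          ⟨(ι t.succ : ℕ) - 1, by have := (ι t.succ).isLt; have := hne t; omega⟩ with hι'def
        have hval : ∀ t : Fin l', (ι' t : ℕ) = (ι t.succ : ℕ) - 1 := fun t => rfl
        have hmono' : StrictMono ι' := by
          intro s t hst
          have h1 := hι (Fin.succ_lt_succ_iff.mpr hst)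
          rw [Fin.lt_def] at h1 ⊢
          rw [hval s, hval t]
          have := hne s
          omega
        have htail : (fun x : Fin n => spread ι g x.succ) = spread ι' (fun t => g t.succ) := by
          funext x
          unfold spread
          rw [Fin.sum_univ_succ]
          have hz : (if ι 0 = x.succ then g 0 else 0) = 0 := by
            rw [if_neg]
            rw [h0]
            exact (Fin.succ_ne_zero x).symm
          rw [hz, zero_add]
          refine Finset.sum_congr rfl (fun t _ => ?_)
          refine if_congr ?_ rfl rfl
          rw [Fin.ext_iff, Fin.ext_iff]
          rw [hval t]
          have h5 := hne t
          have h6 : (x.succ : ℕ) = (x:ℕ) + 1 := rfl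
          omega
        have hI := ih l' ι' (fun t => g t.succ) hmono' (fun t => hg t.succ)
        unfold flat at hI
        rw [if_pos (by simp [hb0, hg 0]), hb0, htail, hI, List.ofFn_succ (f := g)]
      · have hne : ∀ t, (ι t:ℕ) ≠ 0 := by
          intro t
          have h1 : ι 0 ≤ ι t := hι.monotone (Fin.zero_le t)
          have h2 : (ι 0 : ℕ) ≠ 0 := fun h => h0 (Fin.ext (by simpa using h))
          rw [Fin.le_def] at h1
          omega
        have hb0 : spread ι g 0 = 0 := spread_eq_zero (fun t h => hne t (by rw [h]; rfl))
        set ι' : Fin (l'+1) → Fin n := fun t =>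
          ⟨(ι t:ℕ) - 1, by have := (ι t).isLt; have := hne t; omega⟩ with hι'def
        have hval : ∀ t, (ι' t : ℕ) = (ι t : ℕ) - 1 := fun t => rfl
        have hmono' : StrictMono ι' := by
          intro s t hst
          have h1 := hι hst
          rw [Fin.lt_def] at h1 ⊢
          rw [hval s, hval t]
          have := hne s
          omega
        have htail : (fun x : Fin n => spread ι g x.succ) = spread ι' g := by
          funext x
          unfold spread
          refine Finset.sum_congr rfl (fun t _ => ?_)
          refine if_congr ?_ rfl rfl
          rw [Fin.ext_iff, Fin.ext_iff]
          rw [hval t]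
          have h5 := hne t
          have h6 : (x.succ : ℕ) = (x:ℕ) + 1 := rfl
          omega
        have hI := ih (l'+1) ι' g hmono' hg
        unfold flat at hI
        rw [if_neg (by simp [hb0]), htail, hI]

lemma exists_spread : ∀ (n : ℕ) (b : Fin n → ℕ) (γ : List ℕ), flat b = γ →
    ∃ ι : Fin γ.length → Fin n, StrictMono ι ∧ b = spread ι γ.get := by
  intro n
  induction n with
  | zero =>
    intro b γ hγ
    have hγ' : γ = [] := by rw [← hγ]; exact flat_eq_nil (fun i => i.elim0)
    subst hγ'
    exact ⟨fun t => t.elim0, fun s => s.elim0, funext (fun x => x.elim0)⟩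
  | succ n ih =>
    intro b γ hγ
    by_cases hb0 : b 0 = 0
    · have h2 : flat (fun x => b x.succ) = γ := by
        rw [← hγ, flat, flat, List.ofFn_succ (f := b), List.filter_cons, if_neg (by simp [hb0])]
      obtain ⟨ι', hm, he⟩ := ih _ γ h2
      refine ⟨fun t => (ι' t).succ, fun s t h => Fin.succ_lt_succ_iff.mpr (hm h), ?_⟩
      funext x
      refine Fin.cases ?_ ?_ x
      · rw [hb0]
        exact (spread_eq_zero (fun t => Fin.succ_ne_zero _)).symm
      · intro x
        have hx := congrFun he x
        rw [hx]
        unfold spread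
        exact Finset.sum_congr rfl (fun t _ => if_congr (by simp [Fin.succ_inj]) rfl rfl)
    · have h2 : γ = b 0 :: flat (fun x => b x.succ) := by
        rw [← hγ, flat, List.ofFn_succ (f := b), List.filter_cons, if_pos (by simp [hb0])]
        rfl
      subst h2
      obtain ⟨ι', hm, he⟩ := ih (fun x => b x.succ) _ rfl
      refine ⟨Fin.cases 0 (fun t => (ι' t).succ), ?_, ?_⟩
      · intro s t hst
        rcases Fin.eq_zero_or_eq_succ s with rfl | ⟨s', rfl⟩
        · rcases Fin.eq_zero_or_eq_succ t with rfl | ⟨t', rfl⟩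
          · exact absurd hst (lt_irrefl _)
          · simp only [Fin.cases_zero, Fin.cases_succ]
            exact Fin.succ_pos _
        · rcases Fin.eq_zero_or_eq_succ t with rfl | ⟨t', rfl⟩
          · exact absurd hst (Fin.not_lt_zero _)
          · simp only [Fin.cases_succ]
            exact Fin.succ_lt_succ_iff.mpr (hm (Fin.succ_lt_succ_iff.mp hst))
      · funext x
        refine Fin.cases ?_ ?_ x
        · unfold spread
          simp only [List.length_cons]
          rw [Fin.sum_univ_succ]
          simp [Fin.succ_ne_zero]
        · intro x
          have hx := congrFun he x
          unfold spread at hx ⊢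
          simp only [List.length_cons]
          rw [Fin.sum_univ_succ]
          simp only [Fin.cases_zero, Fin.cases_succ]
          simp only [Ne.symm (Fin.succ_ne_zero x), ↓reduceIte, zero_add]
          rw [hx]
          exact Finset.sum_congr rfl (fun t _ => if_congr Fin.succ_inj.symm rfl rfl)

end Chunk1
section Chunk2
variable {n k : ℕ}

lemma placeExp_eq (γ : List ℕ) (i : Fin γ.length → Fin n) :
    placeExp γ i = Finsupp.equivFunOnFinite.symm (spread i γ.get) := by
  ext x
  have h1 : (Finsupp.equivFunOnFinite.symm (spread i γ.get)) x = spread i γ.get x := rfl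
  rw [placeExp, Finset.sum_apply', h1, spread]
  exact Finset.sum_congr rfl (fun t _ => Finsupp.single_apply)

lemma sum_get (γ : List ℕ) : ∑ t : Fin γ.length, γ.get t = γ.sum := by
  rw [← List.sum_ofFn, List.ofFn_get]

lemma coeff_slideF (a : Fin n → ℕ) (d : Fin n →₀ ℕ) :
    MvPolynomial.coeff d (slideF a) =
      if Dominates (⇑d) a ∧ Refines (flat ⇑d) (flat a) then 1 else 0 := by
  rw [slideF, MvPolynomial.coeff_sum]
  have h1 : ∀ b : Fin n → ℕ,
      MvPolynomial.coeff d ((MvPolynomial.monomial (Finsupp.equivFunOnFinite.symm b)) (1:ℤ)) =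
      if b = ⇑d then (1:ℤ) else 0 := by
    intro b
    rw [MvPolynomial.coeff_monomial]
    refine if_congr ?_ rfl rfl
    constructor
    · intro h; rw [← h]; rfl
    · intro h; rw [h]; simp
  rw [Finset.sum_congr rfl (fun b _ => h1 b), Finset.sum_ite_eq' _ (⇑d) (fun _ => (1:ℤ))]
  refine if_congr ?_ rfl rfl
  rw [Finset.mem_filter]
  constructor
  · rintro ⟨-, h⟩; exact h
  · intro h
    refine ⟨?_, h⟩
    rw [wcFinset, Fintype.mem_piFinset]
    intro x
    rw [Finset.mem_range]
    have hsum : ∑ j, (⇑d) j = ∑ j, a j := by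
      have h2 := refines_sum h.2
      rw [sum_flat, sum_flat] at h2
      exact h2
    have h3 : (⇑d) x ≤ ∑ j, (⇑d) j :=
      Finset.single_le_sum (fun j _ => Nat.zero_le _) (Finset.mem_univ x)
    omega

lemma prod_monomial {σ : Type*} (s : Finset σ) (f : σ → (Fin n →₀ ℕ)) :
    ∏ t ∈ s, (MvPolynomial.monomial (f t) (1:ℤ)) = MvPolynomial.monomial (∑ t ∈ s, f t) 1 := by
  induction s using Finset.induction_on with
  | empty => simp [MvPolynomial.monomial_zero']
  | insert _ _ h ih =>
    rw [Finset.prod_insert h, Finset.sum_insert h, ih, MvPolynomial.monomial_mul, one_mul]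

lemma mqs_term (γ : List ℕ) (i : Fin γ.length → Fin n) :
    (∏ t, (MvPolynomial.X (i t) : MvPolynomial (Fin n) ℤ) ^ γ.get t) =
      MvPolynomial.monomial (placeExp γ i) 1 := by
  rw [placeExp, ← prod_monomial]
  exact Finset.prod_congr rfl (fun t _ => MvPolynomial.X_pow_eq_monomial)

lemma coeff_Mqs (γ : List ℕ) (hγ : ∀ x ∈ γ, x ≠ 0) (d : Fin n →₀ ℕ) :
    MvPolynomial.coeff d (Mqs n k γ) =
      if flat ⇑d = γ ∧ ∀ x : Fin n, d x ≠ 0 → (x:ℕ) < k then 1 else 0 := by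
  have hget : ∀ t : Fin γ.length, γ.get t ≠ 0 := fun t => hγ _ (List.get_mem _ _)
  rw [Mqs, MvPolynomial.coeff_sum]
  have hterm : ∀ i : Fin γ.length → Fin n,
      MvPolynomial.coeff d (∏ t, (MvPolynomial.X (i t) : MvPolynomial (Fin n) ℤ) ^ γ.get t) =
      if placeExp γ i = d then (1:ℤ) else 0 := fun i => by
    rw [mqs_term, MvPolynomial.coeff_monomial]
  rw [Finset.sum_congr rfl (fun i _ => hterm i)]
  have hspread_of : ∀ i : Fin γ.length → Fin n, placeExp γ i = d → spread i γ.get = ⇑d := by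
    intro i h
    rw [placeExp_eq] at h
    rw [← h]
    rfl
  have hrange : ∀ i : Fin γ.length → Fin n, spread i γ.get = ⇑d → StrictMono i →
      Set.range i = {x : Fin n | d x ≠ 0} := by
    intro i hsp hm
    ext x
    constructor
    · rintro ⟨t, rfl⟩
      have : spread i γ.get (i t) = γ.get t := spread_apply_inj hm.injective _ t
      rw [hsp] at this
      exact fun hz => hget t (by rw [← this]; exact hz)
    · intro hx
      have : spread i γ.get x ≠ 0 := by rw [hsp]; exact hx
      exact exists_of_spread_ne_zero this
  by_cases hcond : flat ⇑d = γ ∧ ∀ x : Fin n, d x ≠ 0 → (x:ℕ) < k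
  · rw [if_pos hcond]
    obtain ⟨hflat, hsupp⟩ := hcond
    obtain ⟨ι, hmono, hsp⟩ := exists_spread n (⇑d) γ hflat
    have hdval : ∀ t, (⇑d) (ι t) = γ.get t := fun t => by
      rw [hsp]; exact spread_apply_inj hmono.injective _ t
    have hmem : ι ∈ (Finset.univ : Finset (Fin γ.length → Fin n)).filter
        (fun i : Fin γ.length → Fin n => StrictMono i ∧ ∀ t, (i t : ℕ) < k) := by
      rw [Finset.mem_filter]
      exact ⟨Finset.mem_univ _, hmono, fun t => hsupp (ι t) (by rw [hdval t]; exact hget t)⟩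
    rw [Finset.sum_eq_single_of_mem ι hmem ?_]
    · rw [if_pos (by rw [placeExp_eq, ← hsp]; simp)]
    · intro i' hi' hne
      rw [Finset.mem_filter] at hi'
      rw [if_neg]
      intro heq
      apply hne
      have hsp' := hspread_of i' heq
      exact (StrictMono.range_inj hi'.2.1 hmono).mp
        (by rw [hrange i' hsp' hi'.2.1, hrange ι hsp.symm hmono])
  · rw [if_neg hcond]
    refine Finset.sum_eq_zero (fun i hi => ?_)
    rw [Finset.mem_filter] at hi
    rw [if_neg]
    intro heq
    apply hcond
    have hsp' := hspread_of i heq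
    constructor
    · rw [← hsp', flat_spread n _ i γ.get hi.2.1 hget, List.ofFn_get]
    · intro x hx
      have : spread i γ.get x ≠ 0 := by rw [hsp']; exact hx
      obtain ⟨t, rfl⟩ := exists_of_spread_ne_zero this
      exact hi.2.2 t

lemma coeff_Fqs (α : List ℕ) (hα : ∀ x ∈ α, x ≠ 0) (d : Fin n →₀ ℕ) :
    MvPolynomial.coeff d (Fqs n k α) =
      if Refines (flat ⇑d) α ∧ (∀ x : Fin n, d x ≠ 0 → (x:ℕ) < k) then 1 else 0 := by
  rw [Fqs, MvPolynomial.coeff_sum]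
  have hterm : ∀ c : Composition α.sum,
      MvPolynomial.coeff d (Mqs n k c.blocks) =
      if flat ⇑d = c.blocks ∧ ∀ x : Fin n, d x ≠ 0 → (x:ℕ) < k then 1 else 0 :=
    fun c => coeff_Mqs c.blocks (fun x hx => (c.blocks_pos hx).ne') d
  rw [Finset.sum_congr rfl (fun c _ => hterm c)]
  by_cases hcond : Refines (flat ⇑d) α ∧ (∀ x : Fin n, d x ≠ 0 → (x:ℕ) < k)
  · rw [if_pos hcond]
    obtain ⟨ι, hmono, hsp⟩ := exists_spread n (⇑d) (flat ⇑d) rfl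
    have hget : ∀ t : Fin (flat ⇑d).length, (flat ⇑d).get t ≠ 0 :=
      fun t => mem_flat_ne_zero (List.get_mem _ _)
    have hιk : ∀ t, (ι t : ℕ) < k := fun t => hcond.2 (ι t)
      (by rw [hsp, spread_apply_inj hmono.injective]; exact hget t)
    have hlen : (flat ⇑d).length ≤ k := length_le_of_strictMono_lt hmono hιk
    have hsum : (flat ⇑d).sum = α.sum := refines_sum hcond.1
    set c₀ : Composition α.sum :=
      ⟨flat ⇑d, fun {x} hx => Nat.pos_of_ne_zero (mem_flat_ne_zero hx), hsum⟩ with hc₀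
    have hmem : c₀ ∈ (Finset.univ : Finset (Composition α.sum)).filter
        (fun c => Refines c.blocks α ∧ c.blocks.length ≤ k) := by
      rw [Finset.mem_filter]
      exact ⟨Finset.mem_univ _, hcond.1, hlen⟩
    rw [Finset.sum_eq_single_of_mem c₀ hmem ?_]
    · rw [if_pos ⟨rfl, hcond.2⟩]
    · intro c _ hne
      rw [if_neg]
      rintro ⟨hb, -⟩
      exact hne (Composition.ext hb.symm)
  · rw [if_neg hcond]
    refine Finset.sum_eq_zero (fun c hc => ?_)
    rw [Finset.mem_filter] at hc
    rw [if_neg]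
    rintro ⟨hb, hsupp⟩
    exact hcond ⟨hb ▸ hc.2.1, hsupp⟩

end Chunk2
section Chunk3
variable {n : ℕ}

lemma card_filter_le_val {m c : ℕ} :
    (Finset.univ.filter (fun t : Fin m => c ≤ (t:ℕ))).card = m - c := by
  by_cases h : c < m
  · have he : Finset.univ.filter (fun t : Fin m => c ≤ (t:ℕ)) = Finset.Ici (⟨c, h⟩ : Fin m) := by
      ext t
      simp [Finset.mem_Ici, Fin.le_def]
    rw [he, Fin.card_Ici]
  · have he : Finset.univ.filter (fun t : Fin m => c ≤ (t:ℕ)) = ∅ :=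
      Finset.filter_eq_empty_iff.mpr (fun t _ => by have := t.isLt; omega)
    rw [he]
    simp
    omega

lemma upclosed_eq {m : ℕ} (U : Finset (Fin m)) (hU : ∀ s t : Fin m, s ≤ t → s ∈ U → t ∈ U) :
    U = Finset.univ.filter (fun t : Fin m => m - U.card ≤ (t:ℕ)) := by
  have hcard : U.card ≤ m := by
    have := Finset.card_le_univ U
    simpa using this
  have hsub : U ⊆ Finset.univ.filter (fun t : Fin m => m - U.card ≤ (t:ℕ)) := by
    intro t ht
    simp only [Finset.mem_filter, Finset.mem_univ, true_and]
    have h1 : Finset.univ.filter (fun t' : Fin m => (t:ℕ) ≤ (t':ℕ)) ⊆ U := by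
      intro t' ht'
      simp only [Finset.mem_filter, Finset.mem_univ, true_and] at ht'
      exact hU t t' ht' ht
    have h2 := Finset.card_le_card h1
    rw [card_filter_le_val] at h2
    have := t.isLt
    omega
  refine Finset.eq_of_subset_of_card_le hsub ?_
  rw [card_filter_le_val]
  omega

lemma sum_get_drop (γ : List ℕ) (dd : ℕ) :
    ∑ t ∈ Finset.univ.filter (fun t : Fin γ.length => dd ≤ (t:ℕ)), γ.get t = (γ.drop dd).sum := by
  conv_rhs => rw [← List.ofFn_get (γ.drop dd)]
  rw [List.sum_ofFn]
  refine Finset.sum_bij' (fun t ht => ⟨(t:ℕ) - dd, ?_⟩)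
    (fun u _ => ⟨dd + (u:ℕ), ?_⟩) ?_ ?_ ?_ ?_ ?_
  · simp only [Finset.mem_filter, Finset.mem_univ, true_and] at ht
    have := t.isLt
    rw [List.length_drop]
    omega
  · have h1 := u.isLt
    have h2 : (γ.drop dd).length = γ.length - dd := List.length_drop
    omega
  · intro t ht
    exact Finset.mem_univ _
  · intro u _
    simp only [Finset.mem_filter, Finset.mem_univ, true_and]
    omega
  · intro t ht
    simp only [Finset.mem_filter, Finset.mem_univ, true_and] at ht
    ext
    simp
    omega
  · intro u _
    ext
    simp
  · intro t ht
    simp only [Finset.mem_filter, Finset.mem_univ, true_and] at ht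
    rw [List.get_eq_getElem, List.get_eq_getElem, List.getElem_drop]
    congr 1
    show (t:ℕ) = dd + ((t:ℕ) - dd)
    omega

lemma sum_drop_le_sum_drop (γ : List ℕ) {u v : ℕ} (h : u ≤ v) :
    (γ.drop v).sum ≤ (γ.drop u).sum := by
  have he : γ.drop v = (γ.drop u).drop (v - u) := by
    rw [List.drop_drop]
    congr 1
    omega
  rw [he]
  exact List.Sublist.sum_le_sum (List.drop_sublist _ _) (fun a _ => Nat.zero_le a)

lemma flatten_length_ge {L : List (List ℕ)} (h : ∀ l ∈ L, l ≠ []) :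
    L.length ≤ L.flatten.length := by
  induction L with
  | nil => simp
  | cons x xs ih =>
    simp only [List.flatten_cons, List.length_append, List.length_cons]
    have hx : 0 < x.length := List.length_pos_iff.mpr (h x (by simp))
    have h2 := ih (fun l hl => h l (by simp [hl]))
    omega

lemma dominates_of_refines_supp {a : Fin n → ℕ} {k : ℕ} (i₀ : Fin n)
    (hki : (i₀:ℕ) + 1 = k) (h0 : a i₀ ≠ 0) (hmax : ∀ j, a j ≠ 0 → j ≤ i₀)
    (hqf : QuasiFlat a) {β : List ℕ} (href : Refines β (flat a))
    {ι : Fin β.length → Fin n} (hι : StrictMono ι) (hιk : ∀ t, (ι t : ℕ) < k) :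
    Dominates (spread ι β.get) a := by
  obtain ⟨L, hL1, hL2⟩ := href
  obtain ⟨ιa, hma, hea⟩ := exists_spread n a (flat a) rfl
  have hgeta : ∀ t, (flat a).get t ≠ 0 := fun t => mem_flat_ne_zero (List.get_mem _ _)
  have haval : ∀ t, a (ιa t) = (flat a).get t := fun t => by
    conv_lhs => rw [hea]
    exact spread_apply_inj hma.injective _ t
  have hsupp_range : ∀ w : Fin n, a w ≠ 0 → ∃ t, ιa t = w := fun w hw =>
    exists_of_spread_ne_zero (by rw [← hea]; exact hw)
  intro i
  have hsums : β.sum = (flat a).sum := by rw [← hL1, ← hL2, List.sum_flatten]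
  rw [psum_spread]
  have hpa : psum a (i:ℕ) =
      ∑ s ∈ Finset.univ.filter (fun s : Fin (flat a).length => (ιa s:ℕ) < (i:ℕ)), (flat a).get s := by
    conv_lhs => rw [hea]
    exact psum_spread _ _ _
  rw [hpa]
  have hca := Finset.sum_filter_add_sum_filter_not Finset.univ
    (fun s : Fin (flat a).length => (ιa s:ℕ) < (i:ℕ)) (flat a).get
  have hcb := Finset.sum_filter_add_sum_filter_not Finset.univ
    (fun t : Fin β.length => (ι t:ℕ) < (i:ℕ)) β.get
  have hta : ∑ s : Fin (flat a).length, (flat a).get s = (flat a).sum := sum_get _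
  have htb : ∑ t : Fin β.length, β.get t = β.sum := sum_get _
  have key : ∑ t ∈ Finset.univ.filter (fun t : Fin β.length => ¬ ((ι t:ℕ) < (i:ℕ))), β.get t ≤
      ∑ s ∈ Finset.univ.filter (fun s : Fin (flat a).length => ¬ ((ιa s:ℕ) < (i:ℕ))), (flat a).get s := by
    by_cases hAll : ∀ s : Fin (flat a).length, ¬ ((ιa s:ℕ) < (i:ℕ))
    · have hUa : Finset.univ.filter (fun s : Fin (flat a).length => ¬ ((ιa s:ℕ) < (i:ℕ))) =
          Finset.univ := by
        refine Finset.filter_true_of_mem (fun s _ => hAll s)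
      rw [hUa, hta, ← hsums, ← htb]
      exact Finset.sum_le_sum_of_subset (Finset.subset_univ _)
    · push_neg at hAll
      obtain ⟨s₁, hs₁⟩ := hAll
      have has₁ : a (ιa s₁) ≠ 0 := by rw [haval]; exact hgeta s₁
      -- upward closure of both sets
      have hupb : ∀ s t : Fin β.length, s ≤ t →
          s ∈ Finset.univ.filter (fun t : Fin β.length => ¬ ((ι t:ℕ) < (i:ℕ))) →
          t ∈ Finset.univ.filter (fun t : Fin β.length => ¬ ((ι t:ℕ) < (i:ℕ))) := by
        intro s t hst hs
        simp only [Finset.mem_filter, Finset.mem_univ, true_and] at hs ⊢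
        have := hι.monotone hst
        rw [Fin.le_def] at this
        omega
      have hupa : ∀ s t : Fin (flat a).length, s ≤ t →
          s ∈ Finset.univ.filter (fun s : Fin (flat a).length => ¬ ((ιa s:ℕ) < (i:ℕ))) →
          t ∈ Finset.univ.filter (fun s : Fin (flat a).length => ¬ ((ιa s:ℕ) < (i:ℕ))) := by
        intro s t hst hs
        simp only [Finset.mem_filter, Finset.mem_univ, true_and] at hs ⊢
        have := hma.monotone hst
        rw [Fin.le_def] at this
        omega
      -- injection gives card inequality
      have hcards : (Finset.univ.filter (fun t : Fin β.length => ¬ ((ι t:ℕ) < (i:ℕ)))).card ≤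
          (Finset.univ.filter (fun s : Fin (flat a).length => ¬ ((ιa s:ℕ) < (i:ℕ)))).card := by
        have hex : ∀ t : Fin β.length, ¬ ((ι t:ℕ) < (i:ℕ)) → ∃ s, ιa s = ι t := by
          intro t ht
          refine hsupp_range (ι t) ?_
          refine hqf (ιa s₁) (ι t) i₀ ?_ ?_ has₁ h0
          · rw [Fin.le_def]; omega
          · rw [Fin.le_def]; have := hιk t; omega
        classical
        refine Finset.card_le_card_of_injOn
          (fun t => if h : ∃ s, ιa s = ι t then h.choose else s₁) ?_ ?_
        · intro t ht
          simp only [Finset.coe_filter, Set.mem_setOf_eq, Finset.mem_filter, Finset.mem_univ, true_and] at ht ⊢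
          have h := hex t ht
          rw [dif_pos h]
          have := h.choose_spec
          rw [this]
          exact ht
        · intro t ht t' ht' heq
          simp only [Finset.coe_filter, Set.mem_setOf_eq, Finset.mem_univ, true_and] at ht ht'
          have h := hex t ht
          have h' := hex t' ht'
          have heq' : (if h : ∃ s, ιa s = ι t then h.choose else s₁) =
              (if h' : ∃ s, ιa s = ι t' then h'.choose else s₁) := heq
          rw [dif_pos h, dif_pos h'] at heq'
          have e1 := h.choose_spec
          have e2 := h'.choose_spec
          rw [heq'] at e1
          rw [e2] at e1
          exact hι.injective e1.symm
      -- rewrite as tails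
      rw [upclosed_eq _ hupb, upclosed_eq _ hupa, sum_get_drop, sum_get_drop]
      -- refinement comparison
      have hs₀ℓ : (Finset.univ.filter (fun s : Fin (flat a).length => ¬ ((ιa s:ℕ) < (i:ℕ)))).card ≤
          (flat a).length := by
        have := Finset.card_le_univ (Finset.univ.filter
          (fun s : Fin (flat a).length => ¬ ((ιa s:ℕ) < (i:ℕ))))
        simpa using this
      set r := (Finset.univ.filter (fun t : Fin β.length => ¬ ((ι t:ℕ) < (i:ℕ)))).card with hr
      set s₀ := (Finset.univ.filter (fun s : Fin (flat a).length => ¬ ((ιa s:ℕ) < (i:ℕ)))).card with hs₀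
      have hLlen : L.length = (flat a).length := by rw [← hL2, List.length_map]
      have hblocks : ∀ l ∈ L, l ≠ [] := by
        intro l hl hnil
        have hmem : l.sum ∈ flat a := by
          rw [← hL2]
          exact List.mem_map_of_mem hl
        exact mem_flat_ne_zero hmem (by rw [hnil]; rfl)
      have hsplit : β = (L.take ((flat a).length - s₀)).flatten ++
          (L.drop ((flat a).length - s₀)).flatten := by
        rw [← List.flatten_append, List.take_append_drop, hL1]
      have hdropβ : β.drop ((L.take ((flat a).length - s₀)).flatten.length) =
          (L.drop ((flat a).length - s₀)).flatten := by
        conv_lhs => rw [hsplit]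
        exact List.drop_left
      have hdropα : (flat a).drop ((flat a).length - s₀) =
          (L.drop ((flat a).length - s₀)).map List.sum := by
        rw [← hL2, List.map_drop]
      have hq2 : (L.take ((flat a).length - s₀)).flatten.length +
          (L.drop ((flat a).length - s₀)).flatten.length = β.length := by
        rw [← List.length_append, ← hsplit]
      have hge : s₀ ≤ (L.drop ((flat a).length - s₀)).flatten.length := by
        have h1 : (L.drop ((flat a).length - s₀)).length ≤
            (L.drop ((flat a).length - s₀)).flatten.length :=
          flatten_length_ge (fun l hl => hblocks l (List.mem_of_mem_drop hl))
        have h2 : (L.drop ((flat a).length - s₀)).length = L.length - ((flat a).length - s₀) :=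
          List.length_drop
        omega
      calc (β.drop (β.length - r)).sum
          ≤ (β.drop ((L.take ((flat a).length - s₀)).flatten.length)).sum := by
            refine sum_drop_le_sum_drop β ?_
            omega
        _ = ((flat a).drop ((flat a).length - s₀)).sum := by
            rw [hdropβ, hdropα, List.sum_flatten]
  omega

lemma supp_lt_of_dominates {a d : Fin n → ℕ} {k : ℕ} (i₀ : Fin n)
    (hki : (i₀:ℕ)+1 = k) (hmax : ∀ j, a j ≠ 0 → j ≤ i₀)
    (hdom : Dominates d a) (hsum : ∑ x, d x = ∑ x, a x) :
    ∀ x, d x ≠ 0 → (x:ℕ) < k := by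
  have hkn : k ≤ n := by have := i₀.isLt; omega
  have hK : psum a k ≤ psum d k := hdom ⟨k, by omega⟩
  have hsa := psum_split a k
  have hsd := psum_split d k
  have hza : ∑ j ∈ Finset.univ.filter (fun j : Fin n => ¬ ((j:ℕ) < k)), a j = 0 := by
    refine Finset.sum_eq_zero (fun j hj => ?_)
    simp only [Finset.mem_filter, Finset.mem_univ, true_and] at hj
    by_contra hja
    have := hmax j hja
    rw [Fin.le_def] at this
    omega
  intro x hx
  by_contra hxk
  have hmem : x ∈ Finset.univ.filter (fun j : Fin n => ¬ ((j:ℕ) < k)) := by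
    simp only [Finset.mem_filter, Finset.mem_univ, true_and]
    omega
  have hle : d x ≤ ∑ j ∈ Finset.univ.filter (fun j : Fin n => ¬ ((j:ℕ) < k)), d j :=
    Finset.single_le_sum (fun _ _ => Nat.zero_le _) hmem
  omega

end Chunk3
section Chunk4
variable {n : ℕ}

lemma cond_iff {a : Fin n → ℕ} {k : ℕ} (i₀ : Fin n) (hki : (i₀:ℕ)+1 = k)
    (h0 : a i₀ ≠ 0) (hmax : ∀ j, a j ≠ 0 → j ≤ i₀) (hqf : QuasiFlat a) (d : Fin n → ℕ) :
    (Dominates d a ∧ Refines (flat d) (flat a)) ↔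
    (Refines (flat d) (flat a) ∧ ∀ x, d x ≠ 0 → (x:ℕ) < k) := by
  constructor
  · rintro ⟨hdom, href⟩
    refine ⟨href, supp_lt_of_dominates i₀ hki hmax hdom ?_⟩
    have h2 := refines_sum href
    rw [sum_flat, sum_flat] at h2
    exact h2
  · rintro ⟨href, hsupp⟩
    refine ⟨?_, href⟩
    obtain ⟨ι, hmono, hsp⟩ := exists_spread n d (flat d) rfl
    have hget : ∀ t, (flat d).get t ≠ 0 := fun t => mem_flat_ne_zero (List.get_mem _ _)
    have hιk : ∀ t, (ι t:ℕ) < k := fun t => hsupp (ι t)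
      (by rw [hsp, spread_apply_inj hmono.injective]; exact hget t)
    rw [hsp]
    exact dominates_of_refines_supp i₀ hki h0 hmax hqf href hmono hιk

lemma slideF_eq_Fqs {a : Fin n → ℕ} {k : ℕ} (i₀ : Fin n) (hki : (i₀:ℕ)+1 = k)
    (h0 : a i₀ ≠ 0) (hmax : ∀ j, a j ≠ 0 → j ≤ i₀) (hqf : QuasiFlat a) :
    slideF a = Fqs n k (flat a) := by
  apply MvPolynomial.ext
  intro d
  rw [coeff_slideF, coeff_Fqs (flat a) (fun x hx => mem_flat_ne_zero hx) d]
  exact if_congr (cond_iff i₀ hki h0 hmax hqf (⇑d)) rfl rfl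

lemma qsym_of_qf {a : Fin n → ℕ} {k : ℕ} (i₀ : Fin n) (hki : (i₀:ℕ)+1 = k)
    (h0 : a i₀ ≠ 0) (hmax : ∀ j, a j ≠ 0 → j ≤ i₀) (hqf : QuasiFlat a) :
    IsQuasisymmetricIn k (slideF a) := by
  intro α' hpos i j hi hj hik hjk
  have hval : ∀ x ∈ α', x ≠ 0 := fun x hx => (hpos x hx).ne'
  have main : ∀ (f : Fin α'.length → Fin n), StrictMono f → (∀ t, (f t:ℕ) < k) →
      MvPolynomial.coeff (placeExp α' f) (slideF a) =
        if Refines α' (flat a) then 1 else 0 := by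
    intro f hf hfk
    rw [placeExp_eq, coeff_slideF]
    have hco : ⇑(Finsupp.equivFunOnFinite.symm (spread f α'.get)) = spread f α'.get := rfl
    have hflat : flat (spread f α'.get) = α' := by
      rw [flat_spread n _ f α'.get hf (fun t => hval _ (List.get_mem _ _)), List.ofFn_get]
    refine if_congr ?_ rfl rfl
    rw [hco, hflat]
    constructor
    · rintro ⟨-, h⟩; exact h
    · intro h
      refine ⟨?_, h⟩
      exact dominates_of_refines_supp i₀ hki h0 hmax hqf h hf hfk
  rw [main i hi hik, main j hj hjk]

lemma qf_of_qsym {a : Fin n → ℕ} {k : ℕ} (i₀ : Fin n) (hki : (i₀:ℕ)+1 = k)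
    (h0 : a i₀ ≠ 0) (hmax : ∀ j, a j ≠ 0 → j ≤ i₀)
    (hq : IsQuasisymmetricIn k (slideF a)) : QuasiFlat a := by
  by_contra hnqf
  rw [QuasiFlat] at hnqf
  push_neg at hnqf
  obtain ⟨x, y, z, hxy, hyz, hax, haz, hay⟩ := hnqf
  obtain ⟨ιa, hma, hea⟩ := exists_spread n a (flat a) rfl
  have hget : ∀ t, (flat a).get t ≠ 0 := fun t => mem_flat_ne_zero (List.get_mem _ _)
  have haval : ∀ t, a (ιa t) = (flat a).get t := fun t => by
    conv_lhs => rw [hea]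
    exact spread_apply_inj hma.injective _ t
  have hsupp_range : ∀ w : Fin n, a w ≠ 0 → ∃ t, ιa t = w := fun w hw =>
    exists_of_spread_ne_zero (by rw [← hea]; exact hw)
  have hιak : ∀ t, (ιa t:ℕ) < k := by
    intro t
    have h1 := hmax (ιa t) (by rw [haval t]; exact hget t)
    rw [Fin.le_def] at h1
    omega
  have hkn : k ≤ n := by have := i₀.isLt; omega
  obtain ⟨tx, htx⟩ := hsupp_range x hax
  have hℓ : 0 < (flat a).length := tx.pos
  have hynot : ∀ t, ιa t ≠ y := by
    intro t h
    apply hget t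
    rw [← haval t, h, hay]
  -- basic order facts
  have hxy' : (x:ℕ) < (y:ℕ) := by
    rw [Fin.le_def] at hxy
    rcases Nat.lt_or_ge (x:ℕ) (y:ℕ) with h | h
    · exact h
    · exfalso; exact hax (by rw [show x = y from Fin.ext (by omega), hay])
  have hyz' : (y:ℕ) < (z:ℕ) := by
    rw [Fin.le_def] at hyz
    rcases Nat.lt_or_ge (y:ℕ) (z:ℕ) with h | h
    · exact h
    · exfalso; exact haz (by rw [show z = y from Fin.ext (by omega), hay])
  have hzk : (z:ℕ) < k := by
    have := hmax z haz
    rw [Fin.le_def] at this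
    omega
  have hyk : (y:ℕ) < k := by omega
  -- the gap forces (flat a).length + ιa 0 < k
  have h00 : (ιa ⟨0, hℓ⟩ : ℕ) ≤ (x:ℕ) := by
    have hle : (⟨0, hℓ⟩ : Fin (flat a).length) ≤ tx := by rw [Fin.le_def]; exact Nat.zero_le _
    have h1 := hma.monotone hle
    rw [Fin.le_def, htx] at h1
    exact h1
  set f : Fin (flat a).length → ℕ := fun t =>
    if (ιa t:ℕ) < (y:ℕ) then (ιa t:ℕ) else (ιa t:ℕ) - 1 with hfdef
  have hynotv : ∀ t, (ιa t:ℕ) ≠ (y:ℕ) := fun t h => hynot t (Fin.ext h)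
  have hfmono : StrictMono f := by
    intro s t hst
    have h1 : (ιa s:ℕ) < (ιa t:ℕ) := hma hst
    have h2 := hynotv s
    have h3 := hynotv t
    by_cases c1 : (ιa s:ℕ) < (y:ℕ) <;> by_cases c2 : (ιa t:ℕ) < (y:ℕ) <;>
      simp only [hfdef, c1, c2, if_pos, if_neg, if_true, if_false] <;> omega
  have hftop : ∀ t, f t ≤ k - 2 := by
    intro t
    have h1 := hιak t
    have h2 := hynotv t
    by_cases c : (ιa t:ℕ) < (y:ℕ) <;>
      simp only [hfdef, c, if_pos, if_neg, if_true, if_false] <;> omega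
  have hmk : (flat a).length + (ιa ⟨0, hℓ⟩ : ℕ) < k := by
    have h1 := strictMono_add_le hfmono ((flat a).length - 1) ⟨0, hℓ⟩
      ⟨(flat a).length - 1, by omega⟩ (by simp)
    have h2 := hftop ⟨(flat a).length - 1, by omega⟩
    have h3 : f ⟨0, hℓ⟩ = (ιa ⟨0, hℓ⟩ : ℕ) := by
      have c : (ιa ⟨0, hℓ⟩:ℕ) < (y:ℕ) := by omega
      simp only [hfdef, c, if_true, if_pos]
    omega
  -- two placements
  set ι2 : Fin (flat a).length → Fin n := fun t =>
    ⟨k - (flat a).length + (t:ℕ), by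
      have h1 := t.isLt
      have h2 : (flat a).length ≤ k := length_le_of_strictMono_lt hma hιak
      omega⟩ with hι2def
  have hι2val : ∀ t, (ι2 t : ℕ) = k - (flat a).length + (t:ℕ) := fun t => rfl
  have hmono2 : StrictMono ι2 := by
    intro s t hst
    rw [Fin.lt_def, hι2val, hι2val]
    rw [Fin.lt_def] at hst
    omega
  have hι2k : ∀ t, (ι2 t:ℕ) < k := by
    intro t
    rw [hι2val]
    have h1 := t.isLt
    omega
  have happ := hq (flat a) (fun u hu => Nat.pos_of_ne_zero (mem_flat_ne_zero hu))
    ιa ι2 hma hmono2 hιak hι2k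
  rw [placeExp_eq, placeExp_eq, ← hea, coeff_slideF, coeff_slideF] at happ
  have hco : ∀ g : Fin n → ℕ, ⇑(Finsupp.equivFunOnFinite.symm g) = g := fun g => rfl
  rw [hco, hco] at happ
  rw [if_pos ⟨dominates_refl a, refines_refl (flat a)⟩] at happ
  have hdom : Dominates (spread ι2 (flat a).get) a := by
    by_contra hnd
    rw [if_neg (fun hc => hnd hc.1)] at happ
    exact one_ne_zero happ
  have hI : psum a ((ιa ⟨0, hℓ⟩:ℕ)+1) ≤ psum (spread ι2 (flat a).get) ((ιa ⟨0, hℓ⟩:ℕ)+1) :=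
    hdom ⟨(ιa ⟨0, hℓ⟩:ℕ) + 1, by have := (ιa ⟨0, hℓ⟩).isLt; omega⟩
  have hz : psum (spread ι2 (flat a).get) ((ιa ⟨0, hℓ⟩:ℕ)+1) = 0 := by
    rw [psum_spread]
    have hemp : Finset.univ.filter
        (fun t : Fin (flat a).length => (ι2 t:ℕ) < (ιa ⟨0, hℓ⟩:ℕ)+1) = ∅ := by
      refine Finset.filter_eq_empty_iff.mpr (fun t _ => ?_)
      rw [hι2val]
      have := t.isLt
      omega
    rw [hemp, Finset.sum_empty]
  have hp : 0 < psum a ((ιa ⟨0, hℓ⟩:ℕ)+1) := by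
    have hmem : ιa ⟨0, hℓ⟩ ∈ Finset.univ.filter
        (fun j : Fin n => (j:ℕ) < (ιa ⟨0, hℓ⟩:ℕ)+1) := by
      simp only [Finset.mem_filter, Finset.mem_univ, true_and]
      omega
    have h1 : a (ιa ⟨0, hℓ⟩) ≤ psum a ((ιa ⟨0, hℓ⟩:ℕ)+1) :=
      Finset.single_le_sum (fun _ _ => Nat.zero_le _) hmem
    have h2 : a (ιa ⟨0, hℓ⟩) ≠ 0 := by rw [haval]; exact hget _
    omega
  omega

end Chunk4
/-- `𝔉_a` is quasisymmetric in `x_1, …, x_k` iff `a` is quasi-flat, where `k`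
is the largest index with `a_k ≠ 0`; in that case `𝔉_a = F_{flat(a)}(x_1, …, x_k)`. -/
theorem fundamentalSlide_quasisymmetric_iff_quasiFlat {n : ℕ} (a : Fin n → ℕ) (k : ℕ)
    (hk : ∃ i : Fin n, (i : ℕ) + 1 = k ∧ a i ≠ 0 ∧ ∀ j : Fin n, a j ≠ 0 → j ≤ i) :
    (IsQuasisymmetricIn k (slideF a) ↔ QuasiFlat a) ∧
    (QuasiFlat a → slideF a = Fqs n k (flat a)) := by
  obtain ⟨i₀, hki, h0, hmax⟩ := hk
  refine ⟨⟨fun hq => qf_of_qsym i₀ hki h0 hmax hq,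
    fun hqf => qsym_of_qf i₀ hki h0 hmax hqf⟩,
    fun hqf => slideF_eq_Fqs i₀ hki h0 hmax hqf⟩

end SlidePaper
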